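/- Let $\mathcal{A}$ be an almost disjoint family and $(Y_n:n\in\omega)$ a $\subseteq$-decreasing sequence of subsets of $\omega$ with each $Y_n\in\mathcal{I}^+(\mathcal{A})$. Then there exists $Y\in\mathcal{I}^+(\mathcal{A})$ which is a pseudointersection of the sequence, i.e., $Y\subseteq^* Y_n$ for all $n$. -/
import Mathlib


open Set

/-- An almost disjoint family on ω: an infinite set of infinite subsets of ℕ
with pairwise finite intersections. -/
def ADFamily (A : Set (Set ℕ)) : Prop :=
  A.Infinite ∧ (∀ a ∈ A, a.Infinite) ∧
    ∀ a ∈ A, ∀ b ∈ A, a ≠ b → (a ∩ b).Finite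

/-- A fin sequence: pairwise disjoint nonempty finite subsets of ℕ. -/
def FinSeq (C : ℕ → Finset ℕ) : Prop :=
  (∀ n, (C n).Nonempty) ∧ ∀ n m, n ≠ m → Disjoint (C n) (C m)

/-- A collection of sets is centered iff every finite nonempty subcollection
has infinite intersection. -/
def Centered (𝒞 : Set (Set ℕ)) : Prop :=
  ∀ F : Finset (Set ℕ), ↑F ⊆ 𝒞 → F.Nonempty → (⋂₀ (F : Set (Set ℕ))).Infinite

/-- The collection {{n ∈ I : a ∩ C(n) ≠ ∅} : a ∈ A} \ [I]^{<ω}. -/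
def traceFamily (A : Set (Set ℕ)) (C : ℕ → Finset ℕ) (I : Set ℕ) : Set (Set ℕ) :=
  {S | (∃ a ∈ A, S = {n ∈ I | ((C n : Set ℕ) ∩ a).Nonempty}) ∧ S.Infinite}

/-- A is fin-intersecting. -/
def FinIntersecting (A : Set (Set ℕ)) : Prop :=
  ∀ C : ℕ → Finset ℕ, FinSeq C →
    ∃ I : Set ℕ, I.Infinite ∧ Centered (traceFamily A C I)

/-- Maximal almost disjoint family. -/
def MADFamily (A : Set (Set ℕ)) : Prop :=
  ADFamily A ∧ ∀ X : Set ℕ, X.Infinite → ∃ a ∈ A, (X ∩ a).Infinite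

/-- X ∈ I⁺(A): X is not almost covered by finitely many members of A. -/
def IPlus (A : Set (Set ℕ)) (X : Set ℕ) : Prop :=
  ∀ B : Finset (Set ℕ), ↑B ⊆ A → (X \ ⋃₀ (B : Set (Set ℕ))).Infinite

/-- The splitting number 𝔰. -/
noncomputable def splittingNumber : Cardinal :=
  sInf {c | ∃ S : Set (Set ℕ), c = Cardinal.mk S ∧ (∀ s ∈ S, s.Infinite) ∧
    ∀ X : Set ℕ, X.Infinite → ∃ s ∈ S, (X ∩ s).Infinite ∧ (X \ s).Infinite}



lemma exists_strictMono_mem (S : ℕ → Set ℕ) (hS : ∀ j, (S j).Infinite) :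
    ∃ f : ℕ → ℕ, StrictMono f ∧ ∀ j, f j ∈ S j := by
  choose g hg hglt using fun (j m : ℕ) => (hS j).exists_gt m
  refine ⟨fun j => Nat.rec (g 0 0) (fun j fj => g (j+1) fj) j, ?_, ?_⟩
  · exact strictMono_nat_of_lt_succ fun n => hglt (n+1) _
  · intro j; cases j with
    | zero => exact hg 0 0
    | succ j => exact hg (j+1) _


theorem stmt15 (A : Set (Set ℕ)) (hA : ADFamily A) (Y : ℕ → Set ℕ)
    (hdec : ∀ n, Y (n + 1) ⊆ Y n) (hplus : ∀ n, IPlus A (Y n)) :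
    ∃ Z : Set ℕ, IPlus A Z ∧ ∀ n, (Z \ Y n).Finite := by
  classical
  have hmono : Antitone Y := antitone_nat_of_succ_le hdec
  set A' : Set (Set ℕ) := {a ∈ A | ∀ n, (a ∩ Y n).Infinite} with hA'def
  have hA'sub : A' ⊆ A := fun a ha => ha.1
  by_cases hinf : A'.Infinite
  · -- Case 1: infinitely many a ∈ A meeting every Y n infinitely
    let emb := hinf.natEmbedding
    set a : ℕ → Set ℕ := fun k => (emb k : Set ℕ) with ha_def
    have ha_inj : Function.Injective a :=
      fun x y h => emb.injective (Subtype.val_injective h)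
    have ha_mem : ∀ k, a k ∈ A' := fun k => (emb k).2
    -- choose strictly increasing sequences f k with f k j ∈ a k ∩ Y (k + j)
    have hSinf : ∀ k j, (a k ∩ Y (k + j)).Infinite := fun k j => (ha_mem k).2 _
    choose f hf1 hf2 using fun k =>
      exists_strictMono_mem (fun j => a k ∩ Y (k + j)) (hSinf k)
    refine ⟨⋃ k, Set.range (f k), ?_, ?_⟩
    · intro B hB
      -- find k with a k ∉ B
      have : ∃ k, a k ∉ (B : Set (Set ℕ)) := by
        by_contra h
        push_neg at h
        exact (Set.infinite_range_of_injective ha_inj)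
          (B.finite_toSet.subset (Set.range_subset_iff.mpr h))
      obtain ⟨k, hk⟩ := this
      have hWsub : Set.range (f k) ⊆ a k := by
        rintro x ⟨j, rfl⟩; exact (hf2 k j).1
      have hWinf : (Set.range (f k)).Infinite :=
        Set.infinite_range_of_injective (hf1 k).injective
      have hfin : (Set.range (f k) ∩ ⋃₀ (B : Set (Set ℕ))).Finite := by
        rw [Set.sUnion_eq_biUnion, Set.inter_iUnion₂]
        refine Set.Finite.biUnion B.finite_toSet fun b hb => ?_
        refine (hA.2.2 (a k) (ha_mem k).1 b (hB hb) ?_).subset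
          fun x hx => ⟨hWsub hx.1, hx.2⟩
        rintro rfl; exact hk hb
      refine ((hWinf.diff hfin).mono ?_)
      rintro x ⟨hx1, hx2⟩
      exact ⟨Set.mem_iUnion.mpr ⟨k, hx1⟩, fun h => hx2 ⟨hx1, h⟩⟩
    · intro n
      have : (⋃ k, Set.range (f k)) \ Y n ⊆ ⋃ k ∈ Set.Iio n, f k '' Set.Iio n := by
        rintro x ⟨hx1, hx2⟩
        obtain ⟨k, j, rfl⟩ := by
          simpa using hx1
        have hmemY : f k j ∈ Y (k + j) := (hf2 k j).2
        have hkj : k + j < n := by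
          by_contra h
          exact hx2 (hmono (le_of_not_gt h) hmemY)
        exact Set.mem_biUnion (show k ∈ Set.Iio n from lt_of_le_of_lt (Nat.le_add_right k j) hkj)
          ⟨j, lt_of_le_of_lt (Nat.le_add_left j k) hkj, rfl⟩
      exact (Set.Finite.biUnion (Set.finite_Iio n)
        fun k _ => (Set.finite_Iio n).image _).subset this
  · -- Case 2: A' finite
    rw [Set.not_infinite] at hinf
    set F : Finset (Set ℕ) := hinf.toFinset with hFdef
    have hFsub : (F : Set (Set ℕ)) ⊆ A := by
      intro x hx; exact hA'sub (by simpa [hFdef] using hx)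
    set Y' : ℕ → Set ℕ := fun n => Y n \ ⋃₀ (F : Set (Set ℕ)) with hY'def
    have hY'plus : ∀ n (B : Finset (Set ℕ)), ↑B ⊆ A → (Y' n \ ⋃₀ (B : Set (Set ℕ))).Infinite := by
      intro n B hB
      have := hplus n (F ∪ B) (by
        rw [Finset.coe_union]; exact Set.union_subset hFsub hB)
      refine this.mono ?_
      intro x hx
      rw [Finset.coe_union, Set.sUnion_union] at hx
      exact ⟨⟨hx.1, fun h => hx.2 (Or.inl h)⟩, fun h => hx.2 (Or.inr h)⟩
    have hY'inf : ∀ n, (Y' n).Infinite := by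
      intro n
      simpa using hY'plus n ∅ (by simp)
    have hY'mono : Antitone Y' := fun n m h => Set.diff_subset_diff_left (hmono h)
    have key : ∀ a ∈ A, ∃ n, (a ∩ Y' n).Finite := by
      intro b hb
      by_cases hbA' : b ∈ A'
      · refine ⟨0, Set.Finite.subset (Set.finite_empty) ?_⟩
        rintro x ⟨hx1, _, hx3⟩
        exact hx3 ⟨b, by simpa [hFdef] using hbA', hx1⟩
      · have : ∃ n, ¬(b ∩ Y n).Infinite := by
          by_contra h; push_neg at h; exact hbA' ⟨hb, h⟩
        obtain ⟨n, hn⟩ := this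
        rw [Set.not_infinite] at hn
        exact ⟨n, hn.subset fun x hx => ⟨hx.1, hx.2.1⟩⟩
    obtain ⟨z, hz1, hz2⟩ := exists_strictMono_mem Y' hY'inf
    have hZinf : (Set.range z).Infinite := Set.infinite_range_of_injective hz1.injective
    have hZb : ∀ b ∈ A, (Set.range z ∩ b).Finite := by
      intro b hb
      obtain ⟨n, hn⟩ := key b hb
      refine (((Set.finite_Iio n).image z).union hn).subset ?_
      rintro x ⟨⟨j, rfl⟩, hxb⟩
      rcases lt_or_ge j n with h | h
      · exact Or.inl ⟨j, h, rfl⟩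
      · exact Or.inr ⟨hxb, hY'mono h (hz2 j)⟩
    refine ⟨Set.range z, ?_, ?_⟩
    · intro B hB
      have hfin : (Set.range z ∩ ⋃₀ (B : Set (Set ℕ))).Finite := by
        rw [Set.sUnion_eq_biUnion, Set.inter_iUnion₂]
        exact Set.Finite.biUnion B.finite_toSet fun b hb => hZb b (hB hb)
      refine (hZinf.diff hfin).mono ?_
      rintro x ⟨hx1, hx2⟩
      exact ⟨hx1, fun h => hx2 ⟨hx1, h⟩⟩
    · intro n
      refine ((Set.finite_Iio n).image z).subset ?_
      rintro x ⟨⟨j, rfl⟩, hx2⟩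
      refine ⟨j, ?_, rfl⟩
      by_contra h
      exact hx2 (hmono (le_of_not_gt h) (hz2 j).1)
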